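/- The map φ : ℝ⁷ → ℝ⁶ given by φ(γ, ℓ₁, ℓ₂, ℓ₃, h₁, h₂, x) = (p₁,...,p₆) with p₁ = 1 − ℓ₃(1 − γ + γx), p₂ = 1 − ℓ₁ℓ₃(γ²h₁x + 2γ(1−γ) + (1−γ)²h₂), p₃ = 1 − xℓ₂ℓ₃, p₄ = ℓ₂(γ + (1−γ)x)/3, p₅ = ℓ₁(γ²h₁ + γ(1−γ)(3−x) + (1−γ)²h₂)/3, p₆ = ℓ₁ℓ₂(γ²h₁ + 2γ(1−γ) + (1−γ)²h₂x)/3, is not injective: there exist two distinct parameter vectors in (0,1)⁷ with equal images. -/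

import Mathlib

noncomputable def phi (θ : Fin 7 → ℝ) : Fin 6 → ℝ :=
  let γ := θ 0; let ℓ₁ := θ 1; let ℓ₂ := θ 2; let ℓ₃ := θ 3
  let h₁ := θ 4; let h₂ := θ 5; let x := θ 6
  ![1 - ℓ₃ * (1 - γ + γ * x),
    1 - ℓ₁ * ℓ₃ * (γ ^ 2 * h₁ * x + 2 * γ * (1 - γ) + (1 - γ) ^ 2 * h₂),
    1 - x * ℓ₂ * ℓ₃,
    ℓ₂ * (γ + (1 - γ) * x) / 3,
    ℓ₁ * (γ ^ 2 * h₁ + γ * (1 - γ) * (3 - x) + (1 - γ) ^ 2 * h₂) / 3,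
    ℓ₁ * ℓ₂ * (γ ^ 2 * h₁ + 2 * γ * (1 - γ) + (1 - γ) ^ 2 * h₂ * x) / 3]

theorem stmt_15 :
    ∃ θ θ' : Fin 7 → ℝ, (∀ i, θ i ∈ Set.Ioo (0:ℝ) 1) ∧ (∀ i, θ' i ∈ Set.Ioo (0:ℝ) 1) ∧
      θ ≠ θ' ∧ phi θ = phi θ' := by
  refine ⟨![1/3, 1/2, 1/2, 1/2, 1/4, 3/4, 1/2],
          ![2/3, 41/80, 2/5, 5/8, 61/82, 3/41, 1/2], ?_, ?_, ?_, ?_⟩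
  · intro i
    fin_cases i <;> constructor <;> norm_num
  · intro i
    fin_cases i <;> constructor <;> norm_num
  · intro h
    have := congrFun h 0
    norm_num at this
  · funext i
    fin_cases i <;>
      norm_num [phi,
        show (![1/3, 1/2, 1/2, 1/2, 1/4, 3/4, 1/2] : Fin 7 → ℝ) 2 = 1/2 from rfl,
        show (![1/3, 1/2, 1/2, 1/2, 1/4, 3/4, 1/2] : Fin 7 → ℝ) 3 = 1/2 from rfl,
        show (![1/3, 1/2, 1/2, 1/2, 1/4, 3/4, 1/2] : Fin 7 → ℝ) 4 = 1/4 from rfl,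
        show (![2/3, 41/80, 2/5, 5/8, 61/82, 3/41, 1/2] : Fin 7 → ℝ) 2 = 2/5 from rfl,
        show (![2/3, 41/80, 2/5, 5/8, 61/82, 3/41, 1/2] : Fin 7 → ℝ) 3 = 5/8 from rfl,
        show (![2/3, 41/80, 2/5, 5/8, 61/82, 3/41, 1/2] : Fin 7 → ℝ) 4 = 61/82 from rfl,
        show (![1/3, 1/2, 1/2, 1/2, 1/4, 3/4, 1/2] : Fin 7 → ℝ) 5 = 3/4 from rfl,
        show (![1/3, 1/2, 1/2, 1/2, 1/4, 3/4, 1/2] : Fin 7 → ℝ) 6 = 1/2 from rfl,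
        show (![2/3, 41/80, 2/5, 5/8, 61/82, 3/41, 1/2] : Fin 7 → ℝ) 5 = 3/41 from rfl,
        show (![2/3, 41/80, 2/5, 5/8, 61/82, 3/41, 1/2] : Fin 7 → ℝ) 6 = 1/2 from rfl]
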